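/- Let R be a commutative Noetherian ring of finite Krull dimension and M a finitely generated R-module. If M has an infinite strictly descending chain of submodules M = M₀ ⊋ M₁ ⊋ M₂ ⊋ ... such that every subquotient M_i/M_{i+1} is nonzero of Krull dimension α, then the Krull dimension of M is strictly greater than α. -/

import Mathlib

open scoped Classical

section Aux

lemma isArtinian_of_algebraMap_surjective {R S M : Type*} [CommRing R] [CommRing S] [Algebra R S]
    (h : Function.Surjective (algebraMap R S)) [AddCommGroup M] [Module R M] [Module S M]
    [IsScalarTower R S M] [IsArtinian S M] : IsArtinian R M := by
  rw [isArtinian_iff]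
  let f : Submodule R M → Submodule S M := fun N =>
    { carrier := N
      add_mem' := fun ha hb => N.add_mem ha hb
      zero_mem' := N.zero_mem
      smul_mem' := by
        intro s x hx
        obtain ⟨r, rfl⟩ := h s
        rw [algebraMap_smul]
        exact N.smul_mem r hx }
  have hle : ∀ a b, f a ≤ f b ↔ a ≤ b := fun a b => Iff.rfl
  have hinj : Function.Injective f := by
    intro a b hab
    exact le_antisymm ((hle a b).mp hab.le) ((hle b a).mp hab.ge)
  let e : ((· < ·) : Submodule R M → Submodule R M → Prop) ↪r
      ((· < ·) : Submodule S M → Submodule S M → Prop) :=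
    { toFun := f
      inj' := hinj
      map_rel_iff' := by
        intro a b
        show f a < f b ↔ a < b
        simp only [lt_iff_le_not_ge, hle] }
  exact e.wellFounded ((isArtinian_iff S M).mp inferInstance)

lemma isArtinian_of_isMaximal_smul_top_eq_bot {R M : Type*} [CommRing R] (m : Ideal R)
    (hm : m.IsMaximal) [AddCommGroup M] [Module R M] [Module.Finite R M]
    (h : m • (⊤ : Submodule R M) = ⊥) : IsArtinian R M := by
  have hts : Module.IsTorsionBySet R M m := by
    intro x a
    show (a : R) • x = 0
    rw [← Submodule.mem_bot R, ← h]
    exact Submodule.smul_mem_smul a.2 Submodule.mem_top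
  letI : Module (R ⧸ m) M := hts.module
  haveI : IsScalarTower R (R ⧸ m) M := hts.isScalarTower
  haveI : Module.Finite (R ⧸ m) M := Module.Finite.of_restrictScalars_finite R (R ⧸ m) M
  haveI := hm
  haveI : IsArtinianRing (R ⧸ m) := by
    letI := Ideal.Quotient.field m
    exact DivisionRing.instIsArtinianRing
  haveI : IsArtinian (R ⧸ m) M := isArtinian_of_fg_of_artinian'
  exact isArtinian_of_algebraMap_surjective (S := R ⧸ m)
    (by rw [Ideal.Quotient.algebraMap_eq]; exact Ideal.Quotient.mk_surjective)

lemma isArtinian_of_isMaximal_pow_smul {R : Type*} [CommRing R] [IsNoetherianRing R] (m : Ideal R)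
    (hm : m.IsMaximal) (n : ℕ) : ∀ (M : Type _) [AddCommGroup M] [Module R M] [Module.Finite R M],
    m ^ n • (⊤ : Submodule R M) = ⊥ → IsArtinian R M := by
  induction n with
  | zero =>
    intro M _ _ _ h
    rw [pow_zero, Ideal.one_eq_top, Submodule.top_smul] at h
    haveI : Subsingleton M := by
      constructor
      intro a b
      have ha : a ∈ (⊥ : Submodule R M) := h ▸ Submodule.mem_top
      have hb : b ∈ (⊥ : Submodule R M) := h ▸ Submodule.mem_top
      rw [Submodule.mem_bot] at ha hb
      rw [ha, hb]
    exact isArtinian_of_finite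
  | succ n ih =>
    intro M _ _ _ h
    haveI : IsNoetherian R M := isNoetherian_of_isNoetherianRing_of_finite R M
    set N : Submodule R M := m • ⊤ with hN
    haveI : Module.Finite R N := by
      have : N.FG := IsNoetherian.noetherian N
      exact Module.Finite.iff_fg.mpr this
    haveI : Module.Finite R (M ⧸ N) := Module.Finite.of_surjective N.mkQ (Submodule.mkQ_surjective N)
    have hN' : m ^ n • (⊤ : Submodule R N) = ⊥ := by
      apply Submodule.map_injective_of_injective (N.injective_subtype)
      rw [Submodule.map_smul'', Submodule.map_bot, Submodule.map_top, Submodule.range_subtype, hN,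
        ← Submodule.smul_assoc, smul_eq_mul, ← pow_succ]
      exact h
    haveI hartN : IsArtinian R N := ih N hN'
    have hq : m • (⊤ : Submodule R (M ⧸ N)) = ⊥ := by
      have htop : (⊤ : Submodule R (M ⧸ N)) = Submodule.map N.mkQ ⊤ := by
        rw [Submodule.map_top, Submodule.range_mkQ]
      rw [htop, ← Submodule.map_smul'']
      rw [eq_bot_iff]
      rintro x ⟨y, hy, rfl⟩
      rw [Submodule.mem_bot, Submodule.mkQ_apply, Submodule.Quotient.mk_eq_zero]
      exact hy
    haveI : IsArtinian R (M ⧸ N) := isArtinian_of_isMaximal_smul_top_eq_bot m hm hq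
    exact (isArtinian_iff_submodule_quotient N).mpr ⟨hartN, inferInstance⟩

lemma aux_coheight_le_ringKrullDim_quotient {R : Type*} [CommRing R] (I : Ideal R)
    (q : PrimeSpectrum R) (hq : I ≤ q.asIdeal) :
    ((Order.coheight q : ℕ∞) : WithBot ℕ∞) ≤ ringKrullDim (R ⧸ I) := by
  let sub := {P : PrimeSpectrum R // I ≤ P.asIdeal}
  have hcomap : ∀ P : sub, Ideal.comap (Ideal.Quotient.mk I)
      (Ideal.map (Ideal.Quotient.mk I) P.1.asIdeal) = P.1.asIdeal := by
    intro P
    rw [Ideal.comap_map_of_surjective _ Ideal.Quotient.mk_surjective]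
    refine sup_eq_left.mpr ?_
    rw [← RingHom.ker_eq_comap_bot, Ideal.mk_ker]
    exact P.2
  let f : sub → PrimeSpectrum (R ⧸ I) := fun P =>
    ⟨Ideal.map (Ideal.Quotient.mk I) P.1.asIdeal,
      Ideal.map_isPrime_of_surjective Ideal.Quotient.mk_surjective
        (by rw [Ideal.mk_ker]; exact P.2)⟩
  have hf : StrictMono f := by
    intro a b hab
    refine lt_of_le_of_ne (Ideal.map_mono hab.le) ?_
    intro he
    apply hab.ne
    apply Subtype.ext
    apply PrimeSpectrum.ext
    have := congrArg (Ideal.comap (Ideal.Quotient.mk I)) (congrArg PrimeSpectrum.asIdeal he)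
    rwa [hcomap a, hcomap b] at this
  have h1 : Order.coheight q ≤ Order.coheight (⟨q, hq⟩ : sub) := by
    apply Order.coheight_le
    intro p hp
    let p' : LTSeries sub := ⟨p.length,
      fun i => ⟨p.toFun i, hq.trans (by rw [← hp]; exact p.monotone (Fin.zero_le i))⟩,
      fun i => p.step i⟩
    have : p'.length ≤ Order.coheight p'.head := Order.length_le_coheight le_rfl
    have hhead : p'.head = ⟨q, hq⟩ := Subtype.ext hp
    rw [hhead] at this
    exact this
  have h2 : Order.coheight (⟨q, hq⟩ : sub) ≤ Order.coheight (f ⟨q, hq⟩) :=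
    Order.coheight_le_coheight_apply_of_strictMono f hf _
  calc ((Order.coheight q : ℕ∞) : WithBot ℕ∞)
      ≤ ((Order.coheight (f ⟨q, hq⟩) : ℕ∞) : WithBot ℕ∞) :=
        WithBot.coe_le_coe.mpr (h1.trans h2)
    _ ≤ ringKrullDim (R ⧸ I) := Order.coheight_le_krullDim _

lemma aux_exists_prime_coheight_ge {R : Type*} [CommRing R] (I : Ideal R) {n : ℕ}
    (h : ringKrullDim (R ⧸ I) = (n : WithBot (WithTop ℕ))) :
    ∃ q : PrimeSpectrum R, I ≤ q.asIdeal ∧ (n : ℕ∞) ≤ Order.coheight q := by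
  have h' : Order.krullDim (PrimeSpectrum (R ⧸ I)) = (n : WithBot ℕ∞) := h
  rcases isEmpty_or_nonempty (PrimeSpectrum (R ⧸ I)) with he | hne
  · rw [Order.krullDim_eq_bot] at h'
    simp at h'
  obtain ⟨P, hP⟩ : ∃ P : PrimeSpectrum (R ⧸ I), (n : ℕ∞) ≤ Order.coheight P := by
    rw [Order.krullDim_eq_iSup_coheight_of_nonempty] at h'
    have hsup : (⨆ P : PrimeSpectrum (R ⧸ I), Order.coheight P) = (n : ℕ∞) :=
      WithBot.coe_injective h'
    cases n with
    | zero => exact ⟨hne.some, by simp⟩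
    | succ n =>
      have hlt : ((n : ℕ∞)) < ⨆ P : PrimeSpectrum (R ⧸ I), Order.coheight P := by
        rw [hsup]
        exact_mod_cast Nat.lt_succ_self n
      obtain ⟨P, hP⟩ := lt_iSup_iff.mp hlt
      refine ⟨P, ?_⟩
      have : ((n : ℕ∞)) + 1 ≤ Order.coheight P := ENat.add_one_le_iff (ENat.coe_ne_top n) |>.mpr hP
      simpa [Nat.cast_succ] using this
  let g : PrimeSpectrum (R ⧸ I) → PrimeSpectrum R := fun P =>
    ⟨Ideal.comap (Ideal.Quotient.mk I) P.asIdeal, Ideal.IsPrime.comap _⟩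
  have hg : StrictMono g := by
    intro a b hab
    refine lt_of_le_of_ne (Ideal.comap_mono hab.le) ?_
    intro he
    apply hab.ne
    apply PrimeSpectrum.ext
    have hinj : Function.Injective (Ideal.comap (Ideal.Quotient.mk I) :
        Ideal (R ⧸ I) → Ideal R) := Ideal.comap_injective_of_surjective _
      Ideal.Quotient.mk_surjective
    exact hinj (congrArg PrimeSpectrum.asIdeal he)
  refine ⟨g P, ?_, le_trans hP (Order.coheight_le_coheight_apply_of_strictMono g hg P)⟩
  intro x hx
  show Ideal.Quotient.mk I x ∈ P.asIdeal
  rw [Ideal.Quotient.eq_zero_iff_mem.mpr hx]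
  exact P.asIdeal.zero_mem

lemma aux_mem_minimalPrimes {R : Type*} [CommRing R] (I : Ideal R) {α : ℕ}
    (hdim : ringKrullDim (R ⧸ I) ≤ (α : WithBot (WithTop ℕ)))
    (q : PrimeSpectrum R) (hIq : I ≤ q.asIdeal) (hco : (α : ℕ∞) ≤ Order.coheight q) :
    q.asIdeal ∈ I.minimalPrimes := by
  haveI := q.isPrime
  obtain ⟨q₀, hq₀min, hq₀le⟩ := Ideal.exists_minimalPrimes_le hIq
  let Q₀ : PrimeSpectrum R := ⟨q₀, hq₀min.1.1⟩
  have hco₀ : (Order.coheight Q₀ : ℕ∞) ≤ (α : ℕ∞) := by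
    have := (aux_coheight_le_ringKrullDim_quotient I Q₀ hq₀min.1.2).trans hdim
    exact (WithBot.coe_le_coe (a := Order.coheight Q₀) (b := (α : ℕ∞))).mp this
  have hcoq : (Order.coheight q : ℕ∞) ≤ (α : ℕ∞) := by
    have := (aux_coheight_le_ringKrullDim_quotient I q hIq).trans hdim
    exact (WithBot.coe_le_coe (a := Order.coheight q) (b := (α : ℕ∞))).mp this
  have heq : q₀ = q.asIdeal := by
    by_contra hne
    have hlt : Q₀ < q := lt_of_le_of_ne hq₀le (fun he => hne (congrArg PrimeSpectrum.asIdeal he))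
    have hfin : Order.coheight q < ⊤ := lt_of_le_of_lt hcoq (ENat.coe_lt_top α)
    have hlt2 := Order.coheight_strictAnti hlt hfin
    have habs : (α : ℕ∞) < (α : ℕ∞) := lt_of_le_of_lt hco (lt_of_lt_of_le hlt2 hco₀)
    exact absurd habs (lt_irrefl _)
  rw [← heq]
  exact hq₀min

lemma aux_module_finite_localizedModule {R : Type*} [CommRing R] (S : Submonoid R)
    (M : Type*) [AddCommGroup M] [Module R M] [Module.Finite R M] :
    Module.Finite (Localization S) (LocalizedModule S M) := by
  obtain ⟨s, hs⟩ := Module.Finite.fg_top (R := R) (M := M)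
  refine ⟨⟨Finset.image (LocalizedModule.mkLinearMap S M) s, ?_⟩⟩
  rw [eq_top_iff]
  rintro x -
  induction x using LocalizedModule.induction_on with
  | h m t =>
    have hm0 : m ∈ Submodule.span R (↑s : Set M) := by rw [hs]; exact Submodule.mem_top
    have hm1 : (LocalizedModule.mkLinearMap S M) m ∈
        Submodule.span (Localization S) ((LocalizedModule.mkLinearMap S M) '' ↑s) := by
      have h2 : (LocalizedModule.mkLinearMap S M) m ∈
          Submodule.span R ((LocalizedModule.mkLinearMap S M) '' ↑s) := by
        rw [← Submodule.map_span]
        exact Submodule.mem_map_of_mem hm0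
      exact Submodule.span_le_restrictScalars R (Localization S) _ h2
    have heq : (LocalizedModule.mk m t : LocalizedModule S M) =
        Localization.mk 1 t • ((LocalizedModule.mkLinearMap S M) m) := by
      show LocalizedModule.mk m t = Localization.mk 1 t • LocalizedModule.mk m 1
      rw [LocalizedModule.mk_smul_mk, one_smul, mul_one]
    rw [heq]
    apply Submodule.smul_mem
    simpa [Finset.coe_image] using hm1

lemma aux_isArtinian_localized {R : Type*} [CommRing R] [IsNoetherianRing R]
    {M : Type*} [AddCommGroup M] [Module R M] [Module.Finite R M]
    (p : Ideal R) [hpp : p.IsPrime] (hp : p ∈ (Module.annihilator R M).minimalPrimes) :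
    IsArtinian (Localization p.primeCompl) (LocalizedModule p.primeCompl M) := by
  set Rp := Localization p.primeCompl
  set Mp := LocalizedModule p.primeCompl M
  haveI : IsNoetherianRing Rp := IsLocalization.isNoetherianRing p.primeCompl Rp inferInstance
  haveI : Module.Finite Rp Mp := aux_module_finite_localizedModule p.primeCompl M
  set mR : Ideal Rp := IsLocalRing.maximalIdeal Rp with hmR
  -- annihilator of M maps into annihilator of Mp
  have hannmap : ∀ a ∈ Module.annihilator R M, algebraMap R Rp a ∈ Module.annihilator Rp Mp := by
    intro a ha
    rw [Module.mem_annihilator]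
    intro x
    induction x using LocalizedModule.induction_on with
    | h m t =>
      rw [algebraMap_smul, LocalizedModule.smul'_mk,
        Module.mem_annihilator.mp ha m, LocalizedModule.zero_mk]
  -- every prime containing the annihilator of Mp is the maximal ideal
  have hprime : ∀ P : Ideal Rp, P.IsPrime → Module.annihilator Rp Mp ≤ P → P = mR := by
    intro P hP hle
    have hcomap := (IsLocalization.isPrime_iff_isPrime_disjoint p.primeCompl Rp P).mp hP
    set q' := Ideal.comap (algebraMap R Rp) P with hq'
    have hq'prime : q'.IsPrime := hcomap.1
    have hq'le : q' ≤ p := by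
      intro x hx
      by_contra hxp
      exact Set.disjoint_left.mp hcomap.2 hxp hx
    have hannq' : Module.annihilator R M ≤ q' := fun a ha => hle (hannmap a ha)
    have hq'eq : q' = p := le_antisymm hq'le (hp.2 ⟨hq'prime, hannq'⟩ hq'le)
    have h1 : Ideal.comap (algebraMap R Rp) mR = p :=
      Localization.AtPrime.comap_maximalIdeal
    have h2 : Ideal.map (algebraMap R Rp) (Ideal.comap (algebraMap R Rp) mR) = mR :=
      IsLocalization.map_comap p.primeCompl Rp mR
    calc P = Ideal.map (algebraMap R Rp) q' := (IsLocalization.map_comap p.primeCompl Rp P).symm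
      _ = Ideal.map (algebraMap R Rp) p := by rw [hq'eq]
      _ = mR := (congrArg (Ideal.map (algebraMap R Rp)) h1.symm).trans h2
  have hrad : mR ≤ (Module.annihilator Rp Mp).radical := by
    rw [Ideal.radical_eq_sInf]
    refine le_sInf ?_
    rintro J ⟨hJ1, hJ2⟩
    rw [hprime J hJ2 hJ1]
  obtain ⟨n, hn⟩ := Ideal.exists_radical_pow_le_of_fg (I := Module.annihilator Rp Mp)
    (IsNoetherian.noetherian _)
  have hpow : mR ^ n ≤ Module.annihilator Rp Mp :=
    le_trans (Ideal.pow_right_mono hrad n) hn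
  have hsmul : mR ^ n • (⊤ : Submodule Rp Mp) = ⊥ := by
    rw [eq_bot_iff]
    refine Submodule.smul_le.mpr ?_
    intro r hr x _
    rw [Submodule.mem_bot]
    exact Module.mem_annihilator.mp (hpow hr) x
  exact isArtinian_of_isMaximal_pow_smul mR (IsLocalRing.maximalIdeal.isMaximal Rp) n Mp hsmul

end Aux

/-- The Krull dimension of a finitely generated module over a commutative ring:
the Krull dimension of `R / Ann(M)`. -/
noncomputable def moduleKrullDim (R : Type*) [CommRing R] (M : Type*) [AddCommGroup M]
    [Module R M] : WithBot (WithTop ℕ) :=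
  ringKrullDim (R ⧸ Module.annihilator R M)

/-- Let `R` be a commutative Noetherian ring of finite Krull dimension and
`M` a finitely generated `R`-module.  If `M` admits an infinite strictly descending chain of
submodules `M = N₀ ⊋ N₁ ⊋ N₂ ⊋ ⋯` all of whose subquotients `Nᵢ/Nᵢ₊₁` are nonzero of Krull
dimension `α`, then the Krull dimension of `M` is strictly greater than `α`. -/
theorem krullDim_gt_of_infinite_chain
    {R : Type*} [CommRing R] [IsNoetherianRing R] (hR : ringKrullDim R < ⊤)
    {M : Type*} [AddCommGroup M] [Module R M] [Module.Finite R M]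
    (α : ℕ) (N : ℕ → Submodule R M) (hN0 : N 0 = ⊤)
    (hdesc : ∀ i, N (i + 1) < N i)
    (hdim : ∀ i, moduleKrullDim R
        ((N i) ⧸ (Submodule.comap (N i).subtype (N (i + 1)))) = (α : WithBot (WithTop ℕ))) :
    (α : WithBot (WithTop ℕ)) < moduleKrullDim R M := by
  by_contra hcon
  have hle : ringKrullDim (R ⧸ Module.annihilator R M) ≤ (α : WithBot (WithTop ℕ)) :=
    not_lt.mp hcon
  unfold moduleKrullDim at hdim
  haveI : IsNoetherian R M := isNoetherian_of_isNoetherianRing_of_finite R M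
  -- the annihilator of M is contained in each subquotient annihilator
  have hannle : ∀ i, Module.annihilator R M ≤
      Module.annihilator R ((N i) ⧸ (Submodule.comap (N i).subtype (N (i + 1)))) := by
    intro i
    intro r hr
    rw [Module.mem_annihilator]
    intro z
    obtain ⟨y, rfl⟩ := Submodule.Quotient.mk_surjective _ z
    have hy : r • y = (0 : ↥(N i)) := Subtype.ext (by
      show r • (y : M) = (0 : M)
      exact Module.mem_annihilator.mp hr _)
    rw [← Submodule.Quotient.mk_smul, hy, Submodule.Quotient.mk_zero]
  -- choose primes
  have hq : ∀ i, ∃ q : PrimeSpectrum R,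
      Module.annihilator R ((N i) ⧸ (Submodule.comap (N i).subtype (N (i + 1)))) ≤ q.asIdeal ∧
      (α : ℕ∞) ≤ Order.coheight q :=
    fun i => aux_exists_prime_coheight_ge _ (hdim i)
  choose q hqann hqco using hq
  have hqmin : ∀ i, (q i).asIdeal ∈ (Module.annihilator R M).minimalPrimes := fun i =>
    aux_mem_minimalPrimes _ hle (q i) (le_trans (hannle i) (hqann i)) (hqco i)
  -- pigeonhole over the finitely many minimal primes
  have hfin : ((Module.annihilator R M).minimalPrimes).Finite := by
    rw [Ideal.minimalPrimes_eq_comap]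
    exact (minimalPrimes.finite_of_isNoetherianRing (R ⧸ Module.annihilator R M)).image _
  haveI : Finite ↥((Module.annihilator R M).minimalPrimes) := hfin.to_subtype
  set F : ℕ → ↥((Module.annihilator R M).minimalPrimes) := fun i => ⟨(q i).asIdeal, hqmin i⟩
    with hF
  obtain ⟨phat, hphat⟩ := Finite.exists_infinite_fiber F
  set pI : Ideal R := phat.1 with hpI
  haveI hpIp : pI.IsPrime := phat.2.1.1
  have hpImin : pI ∈ (Module.annihilator R M).minimalPrimes := phat.2
  set Rp := Localization pI.primeCompl
  set Mp := LocalizedModule pI.primeCompl M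
  set f := LocalizedModule.mkLinearMap pI.primeCompl M with hf
  haveI : IsArtinian Rp Mp := aux_isArtinian_localized pI hpImin
  -- the localized chain
  set L : ℕ → Submodule Rp Mp := fun i => (N i).localized' Rp pI.primeCompl f with hL
  have hLmono : ∀ n, L (n + 1) ≤ L n := by
    intro n x hx
    obtain ⟨m, hm, t, rfl⟩ := hx
    exact ⟨m, (hdesc n).le hm, t, rfl⟩
  have hLanti : Antitone L := antitone_nat_of_succ_le hLmono
  obtain ⟨n₀, hstab⟩ := IsArtinian.monotone_stabilizes
    (⟨fun i => OrderDual.toDual (L i), fun a b hab => hLanti hab⟩ : ℕ →o (Submodule Rp Mp)ᵒᵈ)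
  obtain ⟨i, hifib, hilt⟩ := (Set.infinite_coe_iff.mp hphat).exists_gt n₀
  have hFi : (q i).asIdeal = pI := congrArg Subtype.val (Set.mem_singleton_iff.mp hifib)
  have hLeq : L i = L (i + 1) := by
    have h1 := hstab i (le_of_lt hilt)
    have h2 := hstab (i + 1) (by omega)
    exact OrderDual.toDual_inj.mp (h1.symm.trans h2)
  -- derive the contradiction
  obtain ⟨s, hs⟩ := IsNoetherian.noetherian (N i)
  have hstep : ∀ x ∈ s, ∃ c : R, c ∈ pI.primeCompl ∧ c • x ∈ N (i + 1) := by
    intro x hx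
    have hxN : x ∈ N i := hs ▸ Submodule.subset_span hx
    have hmem : f x ∈ L i := ⟨x, hxN, 1, IsLocalizedModule.mk'_one pI.primeCompl f x⟩
    rw [hLeq] at hmem
    obtain ⟨m, hm, t, hmk⟩ := hmem
    rw [show f x = IsLocalizedModule.mk' f x 1 from
      (IsLocalizedModule.mk'_one pI.primeCompl f x).symm] at hmk
    obtain ⟨u, hu⟩ := (IsLocalizedModule.mk'_eq_mk'_iff (f := f) m x t 1).mp hmk
    simp only [Submonoid.smul_def, one_smul, smul_smul] at hu
    refine ⟨(u : R) * (t : R), mul_mem u.2 t.2, ?_⟩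
    rw [hu]
    exact (N (i + 1)).smul_mem _ hm
  choose c hc1 hc2 using hstep
  set t' : R := ∏ x ∈ s.attach, c x.1 x.2 with ht'
  have ht'mem : t' ∈ pI.primeCompl := Submonoid.prod_mem _ (fun x _ => hc1 x.1 x.2)
  have ht'smul : ∀ x (hx : x ∈ s), t' • x ∈ N (i + 1) := by
    intro x hx
    have hprod : c x hx * ∏ y ∈ s.attach.erase ⟨x, hx⟩, c y.1 y.2 = t' :=
      Finset.mul_prod_erase s.attach (fun y => c y.1 y.2) (s.mem_attach ⟨x, hx⟩)
    rw [← hprod, mul_comm, mul_smul]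
    exact (N (i + 1)).smul_mem _ (hc2 x hx)
  have ht'span : ∀ y ∈ N i, t' • y ∈ N (i + 1) := by
    intro y hy
    rw [← hs] at hy
    induction hy using Submodule.span_induction with
    | mem z hz => exact ht'smul z hz
    | zero => rw [smul_zero]; exact (N (i + 1)).zero_mem
    | add a b _ _ iha ihb => rw [smul_add]; exact (N (i + 1)).add_mem iha ihb
    | smul r a _ ih => rw [smul_comm]; exact (N (i + 1)).smul_mem r ih
  have ht'ann : t' ∈ Module.annihilator R
      ((N i) ⧸ (Submodule.comap (N i).subtype (N (i + 1)))) := by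
    rw [Module.mem_annihilator]
    intro z
    obtain ⟨y, rfl⟩ := Submodule.Quotient.mk_surjective _ z
    rw [← Submodule.Quotient.mk_smul, Submodule.Quotient.mk_eq_zero]
    exact ht'span (y : M) y.2
  have ht'p : t' ∈ pI := hFi ▸ hqann i ht'ann
  exact ht'mem ht'p
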